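/- In the concrete quasi-free CAR model with past P = {n ∈ ℤ : n < 0} and future F = {n ∈ ℤ : n ≥ 0}: assume there is ε ∈ (0,1/2) with ε ≤ λ_l ≤ 1−ε and λ_l ≠ 1/2 for all l ∈ ℤ, and let ξ ∈ H satisfy the l-th intertwining equations for every l ∈ F. Then for every pair (A,B) of finite subsets of ℤ with ⟨e_{(A,B)}, ξ⟩ ≠ 0, one has card A ≡ card B (mod 2). -/

import Mathlib

/- The concrete quasi-free CAR model: `H = ℓ²(Finset ℤ × Finset ℤ)` with orthonormal basis
`e (A, B)`, vacuum `Ω = e (∅, ∅)`, and operators `a l`, `b l`, `G` given on the basis by the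
quasi-free formulas with symbol `λ` (diagonal, `R h_l = λ_l h_l`). -/

noncomputable section

/-- The GNS Hilbert space: `ℓ²` over pairs of finite subsets of `ℤ`. -/
abbrev CARSpace := lp (fun _ : Finset ℤ × Finset ℤ => ℂ) 2

/-- The orthonormal basis vector `e_{(A,B)}`. -/
def carE (p : Finset ℤ × Finset ℤ) : CARSpace := lp.single 2 p 1

/-- The vacuum vector `Ω = e_{(∅,∅)}`. -/
def carΩ : CARSpace := carE (∅, ∅)

/-- `n(l, X)` = number of elements of `X` strictly below `l`. -/
def nlt (l : ℤ) (X : Finset ℤ) : ℕ := (X.filter fun j => j < l).card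

/-- `a` is the family of quasi-free annihilation-type operators `a_l = π_R(a(h_l))`:
`a_l e_{(A,B)} = √(1−λ_l)·(−1)^{|B|}·(−1)^{n(l,A)}·[l ∉ A]·e_{(A∪{l},B)}
              + √(λ_l)·(−1)^{n(l,B)}·[l ∈ B]·e_{(A,B∖{l})}`. -/
def IsCAR_a (lam : ℤ → ℝ) (a : ℤ → CARSpace →L[ℂ] CARSpace) : Prop :=
  ∀ (l : ℤ) (A B : Finset ℤ),
    a l (carE (A, B)) =
      ((Real.sqrt (1 - lam l) : ℂ) * (-1) ^ B.card * (-1) ^ nlt l A *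
          (if l ∈ A then 0 else 1)) • carE (insert l A, B) +
      ((Real.sqrt (lam l) : ℂ) * (-1) ^ nlt l B *
          (if l ∈ B then 1 else 0)) • carE (A, B.erase l)

/-- `b` is the family of commutant quasi-free operators:
`b_l e_{(A,B)} = √(λ_l)·(−1)^{|B|}·(−1)^{n(l,A)}·[l ∉ A]·e_{(A∪{l},B)}
              − √(1−λ_l)·(−1)^{n(l,B)}·[l ∈ B]·e_{(A,B∖{l})}`. -/
def IsCAR_b (lam : ℤ → ℝ) (b : ℤ → CARSpace →L[ℂ] CARSpace) : Prop :=
  ∀ (l : ℤ) (A B : Finset ℤ),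
    b l (carE (A, B)) =
      ((Real.sqrt (lam l) : ℂ) * (-1) ^ B.card * (-1) ^ nlt l A *
          (if l ∈ A then 0 else 1)) • carE (insert l A, B) -
      ((Real.sqrt (1 - lam l) : ℂ) * (-1) ^ nlt l B *
          (if l ∈ B then 1 else 0)) • carE (A, B.erase l)

/-- `G = Γ⊗Γ` : `G e_{(A,B)} = (−1)^{|A|+|B|} e_{(A,B)}`. -/
def IsCAR_G (G : CARSpace →L[ℂ] CARSpace) : Prop :=
  ∀ (A B : Finset ℤ), G (carE (A, B)) = ((-1 : ℂ) ^ (A.card + B.card)) • carE (A, B)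

/-- `ξ` satisfies the `l`-th intertwining equations:
`(1−λ_l)^{−1/2}·(a_l ξ) = −λ_l^{−1/2}·G(b_l ξ)` and
`λ_l^{−1/2}·(a_l* ξ) = −(1−λ_l)^{−1/2}·b_l*(G ξ)`. -/
def IntertwinesAt (lam : ℤ → ℝ) (a b : ℤ → CARSpace →L[ℂ] CARSpace)
    (G : CARSpace →L[ℂ] CARSpace) (l : ℤ) (ξ : CARSpace) : Prop :=
  (Real.sqrt (1 - lam l) : ℂ)⁻¹ • a l ξ = -((Real.sqrt (lam l) : ℂ)⁻¹) • G (b l ξ) ∧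
  (Real.sqrt (lam l) : ℂ)⁻¹ • (star (a l)) ξ =
    -((Real.sqrt (1 - lam l) : ℂ)⁻¹) • (star (b l)) (G ξ)

local notation "⟪" x ", " y "⟫" => @inner ℂ _ _ x y

lemma coord_inner (p : Finset ℤ × Finset ℤ) (x : CARSpace) : ⟪carE p, x⟫ = x p := by
  simpa [carE] using lp.inner_single_left (𝕜 := ℂ) p (1:ℂ) x
lemma carE_apply (p q : Finset ℤ × Finset ℤ) : (carE p) q = if q = p then 1 else 0 := by
  simp [carE, lp.single_apply, Pi.single_apply]
lemma carSpace_ext {x y : CARSpace} (h : ∀ q, x q = y q) : x = y := lp.ext (funext h)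
lemma star_apply_coord (T : CARSpace →L[ℂ] CARSpace) (x : CARSpace) (p : Finset ℤ × Finset ℤ) :
    ((star T) x) p = ⟪T (carE p), x⟫ := by
  rw [← coord_inner, ContinuousLinearMap.star_eq_adjoint, ContinuousLinearMap.adjoint_inner_right]

lemma apply_coord (T : CARSpace →L[ℂ] CARSpace) (x : CARSpace) (p : Finset ℤ × Finset ℤ) :
    (T x) p = ⟪(star T) (carE p), x⟫ := by
  rw [← coord_inner, ContinuousLinearMap.star_eq_adjoint, ContinuousLinearMap.adjoint_inner_left]

lemma starG_carE {G : CARSpace →L[ℂ] CARSpace} (hG : IsCAR_G G) (p : Finset ℤ × Finset ℤ) :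
    (star G) (carE p) = ((-1 : ℂ) ^ (p.1.card + p.2.card)) • carE p := by
  apply carSpace_ext; intro q
  rw [star_apply_coord, hG q.1 q.2, inner_smul_left, coord_inner, lp.coeFn_smul, Pi.smul_apply,
    carE_apply]
  simp only [Prod.mk.eta]
  by_cases h : q = p
  · subst h; simp
  · simp [h]

lemma G_coord {G : CARSpace →L[ℂ] CARSpace} (hG : IsCAR_G G) (x : CARSpace)
    (p : Finset ℤ × Finset ℤ) :
    (G x) p = ((-1 : ℂ) ^ (p.1.card + p.2.card)) * x p := by
  rw [apply_coord, starG_carE hG, inner_smul_left, coord_inner]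
  simp

lemma nlt_insert_self (l : ℤ) (X : Finset ℤ) : nlt l (insert l X) = nlt l X := by
  unfold nlt; rw [Finset.filter_insert]; simp

lemma ins_eq_iff {l : ℤ} {A' A : Finset ℤ} (hA : l ∈ A) (h' : l ∉ A') :
    insert l A' = A ↔ A' = A.erase l :=
  ⟨fun h => by rw [← h, Finset.erase_insert h'], fun h => by rw [h, Finset.insert_erase hA]⟩

lemma erase_eq_iff' {l : ℤ} {B' B : Finset ℤ} (hB : l ∉ B) (h' : l ∈ B') :
    B'.erase l = B ↔ B' = insert l B :=
  ⟨fun h => by rw [← h, Finset.insert_erase h'], fun h => by rw [h, Finset.erase_insert hB]⟩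


lemma astar_inout {lam : ℤ → ℝ} {op : ℤ → CARSpace →L[ℂ] CARSpace} (hop : IsCAR_a lam op)
    {l : ℤ} {A B : Finset ℤ} (hA : l ∈ A) (hB : l ∉ B) :
    (star (op l)) (carE (A, B)) =
      (((Real.sqrt (1 - lam l) : ℂ)) * (-1) ^ B.card * (-1) ^ nlt l (A.erase l)) •
        carE (A.erase l, B) +
      (((Real.sqrt (lam l) : ℂ)) * (-1) ^ nlt l B) • carE (A, insert l B) := by
  apply carSpace_ext; rintro ⟨A', B'⟩
  rw [star_apply_coord, hop l A' B', inner_add_left, inner_smul_left, inner_smul_left,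
    coord_inner, coord_inner, carE_apply, carE_apply]
  simp only [lp.coeFn_add, Pi.add_apply, lp.coeFn_smul, Pi.smul_apply, carE_apply, smul_eq_mul,
    Prod.mk.injEq]
  have hne1 : ¬(A' = A.erase l ∧ B' = B) ∨ l ∉ A' := by
    by_cases h : l ∈ A'
    · exact Or.inl fun hc => Finset.notMem_erase l A (hc.1 ▸ h)
    · exact Or.inr h
  by_cases hA' : l ∈ A' <;> by_cases hB' : l ∈ B'
  · have hne : ¬(A' = A.erase l ∧ B' = B) := fun hc => Finset.notMem_erase l A (hc.1 ▸ hA')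
    simp only [if_pos hA', if_pos hB', mul_zero, map_zero, zero_mul, mul_one,
      erase_eq_iff' hB hB', if_neg hne, mul_zero]
    congr 1
    by_cases hQ : A' = A ∧ B' = insert l B
    · rw [hQ.2, nlt_insert_self]
      simp [map_mul, map_pow, Complex.conj_ofReal]
    · simp [hQ]
  · have hne : ¬(A' = A.erase l ∧ B' = B) := fun hc => Finset.notMem_erase l A (hc.1 ▸ hA')
    have hne2 : ¬(A' = A ∧ B' = insert l B) := fun hc => hB' (hc.2 ▸ Finset.mem_insert_self l B)
    simp only [if_pos hA', if_neg hB', mul_zero, map_zero, zero_mul, if_neg hne, if_neg hne2]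
    try simp
  · simp only [if_neg hA', if_pos hB', mul_one, ins_eq_iff hA hA', erase_eq_iff' hB hB']
    congr 1
    · by_cases hP : A' = A.erase l ∧ B' = B
      · rw [hP.1, hP.2]
        simp [map_mul, map_pow, Complex.conj_ofReal]
      · simp [hP]
    · by_cases hQ : A' = A ∧ B' = insert l B
      · rw [hQ.2, nlt_insert_self]
        simp [map_mul, map_pow, Complex.conj_ofReal]
      · simp [hQ]
  · have hne2 : ¬(A' = A ∧ B' = insert l B) := fun hc => hB' (hc.2 ▸ Finset.mem_insert_self l B)
    simp only [if_neg hA', if_neg hB', mul_one, mul_zero, map_zero, zero_mul,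
      ins_eq_iff hA hA', if_neg hne2, mul_zero]
    congr 1
    by_cases hP : A' = A.erase l ∧ B' = B
    · rw [hP.1, hP.2]
      simp [map_mul, map_pow, Complex.conj_ofReal]
    · simp [hP]

lemma bstar_inout {lam : ℤ → ℝ} {op : ℤ → CARSpace →L[ℂ] CARSpace} (hop : IsCAR_b lam op)
    {l : ℤ} {A B : Finset ℤ} (hA : l ∈ A) (hB : l ∉ B) :
    (star (op l)) (carE (A, B)) =
      (((Real.sqrt (lam l) : ℂ)) * (-1) ^ B.card * (-1) ^ nlt l (A.erase l)) •
        carE (A.erase l, B) -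
      (((Real.sqrt (1 - lam l) : ℂ)) * (-1) ^ nlt l B) • carE (A, insert l B) := by
  apply carSpace_ext; rintro ⟨A', B'⟩
  rw [star_apply_coord, hop l A' B', inner_sub_left, inner_smul_left, inner_smul_left,
    coord_inner, coord_inner, carE_apply, carE_apply]
  simp only [lp.coeFn_sub, Pi.sub_apply, lp.coeFn_smul, Pi.smul_apply, carE_apply, smul_eq_mul,
    Prod.mk.injEq]
  have hne1 : ¬(A' = A.erase l ∧ B' = B) ∨ l ∉ A' := by
    by_cases h : l ∈ A'
    · exact Or.inl fun hc => Finset.notMem_erase l A (hc.1 ▸ h)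
    · exact Or.inr h
  by_cases hA' : l ∈ A' <;> by_cases hB' : l ∈ B'
  · have hne : ¬(A' = A.erase l ∧ B' = B) := fun hc => Finset.notMem_erase l A (hc.1 ▸ hA')
    simp only [if_pos hA', if_pos hB', mul_zero, map_zero, zero_mul, mul_one,
      erase_eq_iff' hB hB', if_neg hne, mul_zero]
    congr 1
    by_cases hQ : A' = A ∧ B' = insert l B
    · rw [hQ.2, nlt_insert_self]
      simp [map_mul, map_pow, Complex.conj_ofReal]
    · simp [hQ]
  · have hne : ¬(A' = A.erase l ∧ B' = B) := fun hc => Finset.notMem_erase l A (hc.1 ▸ hA')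
    have hne2 : ¬(A' = A ∧ B' = insert l B) := fun hc => hB' (hc.2 ▸ Finset.mem_insert_self l B)
    simp only [if_pos hA', if_neg hB', mul_zero, map_zero, zero_mul, if_neg hne, if_neg hne2]
    try simp
  · simp only [if_neg hA', if_pos hB', mul_one, ins_eq_iff hA hA', erase_eq_iff' hB hB']
    congr 1
    · by_cases hP : A' = A.erase l ∧ B' = B
      · rw [hP.1, hP.2]
        simp [map_mul, map_pow, Complex.conj_ofReal]
      · simp [hP]
    · by_cases hQ : A' = A ∧ B' = insert l B
      · rw [hQ.2, nlt_insert_self]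
        simp [map_mul, map_pow, Complex.conj_ofReal]
      · simp [hQ]
  · have hne2 : ¬(A' = A ∧ B' = insert l B) := fun hc => hB' (hc.2 ▸ Finset.mem_insert_self l B)
    simp only [if_neg hA', if_neg hB', mul_one, mul_zero, map_zero, zero_mul,
      ins_eq_iff hA hA', if_neg hne2, mul_zero]
    congr 1
    by_cases hP : A' = A.erase l ∧ B' = B
    · rw [hP.1, hP.2]
      simp [map_mul, map_pow, Complex.conj_ofReal]
    · simp [hP]

lemma astar_out {lam : ℤ → ℝ} {op : ℤ → CARSpace →L[ℂ] CARSpace} (hop : IsCAR_a lam op)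
    {l : ℤ} {A B : Finset ℤ} (hA : l ∉ A) (hB : l ∉ B) :
    (star (op l)) (carE (A, B)) = (((Real.sqrt (lam l) : ℂ)) * (-1) ^ nlt l B) • carE (A, insert l B) := by
  apply carSpace_ext; rintro ⟨A', B'⟩
  rw [star_apply_coord, hop l A' B', inner_add_left, inner_smul_left, inner_smul_left,
    coord_inner, coord_inner, carE_apply, carE_apply]
  simp only [lp.coeFn_add, Pi.add_apply, lp.coeFn_smul, Pi.smul_apply, carE_apply, smul_eq_mul,
    Prod.mk.injEq]
  have hne1 : ¬(insert l A' = A ∧ B' = B) := fun hc => hA (hc.1 ▸ Finset.mem_insert_self l A')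
  rw [if_neg hne1, mul_zero]
  by_cases hB' : l ∈ B'
  · simp only [if_pos hB', mul_one, erase_eq_iff' hB hB']
    by_cases hQ : A' = A ∧ B' = insert l B
    · rw [hQ.2, nlt_insert_self]
      simp [map_mul, map_pow, Complex.conj_ofReal]
    · simp [hQ]
  · have hne2 : ¬(A' = A ∧ B' = insert l B) := fun hc => hB' (hc.2 ▸ Finset.mem_insert_self l B)
    simp only [if_neg hB', mul_zero, map_zero, zero_mul, if_neg hne2]
    simp

lemma bstar_out {lam : ℤ → ℝ} {op : ℤ → CARSpace →L[ℂ] CARSpace} (hop : IsCAR_b lam op)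
    {l : ℤ} {A B : Finset ℤ} (hA : l ∉ A) (hB : l ∉ B) :
    (star (op l)) (carE (A, B)) = -((((Real.sqrt (1 - lam l) : ℂ)) * (-1) ^ nlt l B) • carE (A, insert l B)) := by
  apply carSpace_ext; rintro ⟨A', B'⟩
  rw [star_apply_coord, hop l A' B', inner_sub_left, inner_smul_left, inner_smul_left,
    coord_inner, coord_inner, carE_apply, carE_apply]
  simp only [lp.coeFn_neg, Pi.neg_apply, lp.coeFn_smul, Pi.smul_apply, carE_apply, smul_eq_mul,
    Prod.mk.injEq]
  have hne1 : ¬(insert l A' = A ∧ B' = B) := fun hc => hA (hc.1 ▸ Finset.mem_insert_self l A')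
  rw [if_neg hne1, mul_zero]
  by_cases hB' : l ∈ B'
  · simp only [if_pos hB', mul_one, erase_eq_iff' hB hB']
    by_cases hQ : A' = A ∧ B' = insert l B
    · rw [hQ.2, nlt_insert_self]
      simp [map_mul, map_pow, Complex.conj_ofReal]
    · simp [hQ]
  · have hne2 : ¬(A' = A ∧ B' = insert l B) := fun hc => hB' (hc.2 ▸ Finset.mem_insert_self l B)
    simp only [if_neg hB', mul_zero, map_zero, zero_mul, if_neg hne2]
    simp

lemma sqrt_facts {lam : ℤ → ℝ} {l : ℤ} (hl0 : 0 < lam l) (hl1 : lam l < 1) (hlh : lam l ≠ 1/2) :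
    (0:ℝ) < Real.sqrt (lam l) ∧ (0:ℝ) < Real.sqrt (1 - lam l) ∧
      Real.sqrt (lam l) ≠ Real.sqrt (1 - lam l) := by
  refine ⟨Real.sqrt_pos.mpr hl0, Real.sqrt_pos.mpr (by linarith), fun h => ?_⟩
  have h2 := congrArg (fun x => x^2) h
  simp only [Real.sq_sqrt hl0.le, Real.sq_sqrt (by linarith : (0:ℝ) ≤ 1 - lam l)] at h2
  exact hlh (by linarith)

lemma K1 {lam : ℤ → ℝ} {a b : ℤ → CARSpace →L[ℂ] CARSpace} {G : CARSpace →L[ℂ] CARSpace}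
    (ha : IsCAR_a lam a) (hb : IsCAR_b lam b) (hG : IsCAR_G G) {ξ : CARSpace} {l : ℤ}
    (h1 : (Real.sqrt (1 - lam l) : ℂ)⁻¹ • a l ξ = -((Real.sqrt (lam l) : ℂ)⁻¹) • G (b l ξ))
    (hl0 : 0 < lam l) (hl1 : lam l < 1) (hlh : lam l ≠ 1/2)
    {A B : Finset ℤ} (hA : l ∉ A) (hB : l ∈ B) (hpar : A.card % 2 ≠ B.card % 2) :
    ξ (A, B) = 0 := by
  obtain ⟨hμ, hν, hμν⟩ := sqrt_facts hl0 hl1 hlh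
  have hpB : l ∉ B.erase l := Finset.notMem_erase l B
  have hcoord := congrArg (fun v : CARSpace => v (A, B.erase l)) h1
  simp only [lp.coeFn_smul, Pi.smul_apply, lp.coeFn_neg, Pi.neg_apply, smul_eq_mul] at hcoord
  rw [apply_coord (a l) ξ, astar_out ha hA hpB, G_coord hG, apply_coord (b l) ξ,
    bstar_out hb hA hpB] at hcoord
  rw [Finset.insert_erase hB] at hcoord
  simp only [inner_neg_left, inner_smul_left, coord_inner, map_mul, map_pow, map_neg, map_one,
    Complex.conj_ofReal] at hcoord
  have hcard : (B.erase l).card = B.card - 1 := Finset.card_erase_of_mem hB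
  have hBpos : 1 ≤ B.card := Finset.card_pos.mpr ⟨l, hB⟩
  have heven : ((-1:ℂ)) ^ (A.card + (B.erase l).card) = 1 := by
    rw [hcard]; apply Even.neg_one_pow; rw [Nat.even_iff]; omega
  rw [heven] at hcoord
  have hμ0 : ((Real.sqrt (lam l) : ℝ) : ℂ) ≠ 0 := by exact_mod_cast hμ.ne'
  have hν0 : ((Real.sqrt (1 - lam l) : ℝ) : ℂ) ≠ 0 := by exact_mod_cast hν.ne'
  field_simp at hcoord
  have hsq : ((Real.sqrt (lam l) : ℂ) * (Real.sqrt (lam l) : ℂ) -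
      (Real.sqrt (1 - lam l) : ℂ) * (Real.sqrt (1 - lam l) : ℂ)) ≠ 0 := by
    rw [← Complex.ofReal_mul, ← Complex.ofReal_mul, ← Complex.ofReal_sub]
    rw [Real.mul_self_sqrt hl0.le, Real.mul_self_sqrt (by linarith : (0:ℝ) ≤ 1 - lam l)]
    simp only [ne_eq, Complex.ofReal_eq_zero]
    intro h; exact hlh (by linarith)
  have hs : ((-1:ℂ)) ^ nlt l (B.erase l) ≠ 0 := pow_ne_zero _ (by norm_num)
  have hz : ((Real.sqrt (lam l) : ℂ) * (Real.sqrt (lam l) : ℂ) -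
      (Real.sqrt (1 - lam l) : ℂ) * (Real.sqrt (1 - lam l) : ℂ)) *
      (((-1:ℂ)) ^ nlt l (B.erase l) * ξ (A, B)) = 0 := by linear_combination ((-1:ℂ)) ^ nlt l (B.erase l) * hcoord
  rcases mul_eq_zero.mp hz with h | h
  · exact absurd h hsq
  · rcases mul_eq_zero.mp h with h' | h'
    · exact absurd h' hs
    · exact h'

lemma K2 {lam : ℤ → ℝ} {a b : ℤ → CARSpace →L[ℂ] CARSpace} {G : CARSpace →L[ℂ] CARSpace}
    (ha : IsCAR_a lam a) (hb : IsCAR_b lam b) (hG : IsCAR_G G) {ξ : CARSpace} {l : ℤ}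
    (h2 : (Real.sqrt (lam l) : ℂ)⁻¹ • (star (a l)) ξ =
      -((Real.sqrt (1 - lam l) : ℂ)⁻¹) • (star (b l)) (G ξ))
    (hl0 : 0 < lam l) (hl1 : lam l < 1) (hlh : lam l ≠ 1/2)
    {A B : Finset ℤ} (hA : l ∈ A) (hB : l ∉ B) (hpar : A.card % 2 ≠ B.card % 2) :
    ξ (A, B) = 0 := by
  obtain ⟨hμ, hν, hμν⟩ := sqrt_facts hl0 hl1 hlh
  have hpA : l ∉ A.erase l := Finset.notMem_erase l A
  have hcoord := congrArg (fun v : CARSpace => v (A.erase l, B)) h2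
  simp only [lp.coeFn_smul, Pi.smul_apply, lp.coeFn_neg, Pi.neg_apply, smul_eq_mul] at hcoord
  rw [star_apply_coord (a l) ξ, star_apply_coord (b l) (G ξ), ha l (A.erase l) B,
    hb l (A.erase l) B, Finset.insert_erase hA] at hcoord
  simp only [inner_add_left, inner_sub_left, inner_smul_left, coord_inner, if_neg hpA,
    if_neg hB, mul_zero, zero_mul, map_zero, add_zero, sub_zero, mul_one, map_mul, map_pow,
    map_neg, map_one, Complex.conj_ofReal] at hcoord
  rw [G_coord hG] at hcoord
  have hodd : ((-1:ℂ)) ^ ((A, B).1.card + (A, B).2.card) = -1 := by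
    apply Odd.neg_one_pow
    show Odd (A.card + B.card)
    rw [Nat.odd_iff]; omega
  rw [hodd] at hcoord
  have hμ0 : ((Real.sqrt (lam l) : ℝ) : ℂ) ≠ 0 := by exact_mod_cast hμ.ne'
  have hν0 : ((Real.sqrt (1 - lam l) : ℝ) : ℂ) ≠ 0 := by exact_mod_cast hν.ne'
  field_simp at hcoord
  have hsq : ((Real.sqrt (lam l) : ℂ) * (Real.sqrt (lam l) : ℂ) -
      (Real.sqrt (1 - lam l) : ℂ) * (Real.sqrt (1 - lam l) : ℂ)) ≠ 0 := by
    rw [← Complex.ofReal_mul, ← Complex.ofReal_mul, ← Complex.ofReal_sub]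
    rw [Real.mul_self_sqrt hl0.le, Real.mul_self_sqrt (by linarith : (0:ℝ) ≤ 1 - lam l)]
    simp only [ne_eq, Complex.ofReal_eq_zero]
    intro h; exact hlh (by linarith)
  have hs : ((-1:ℂ)) ^ B.card * ((-1:ℂ)) ^ nlt l (A.erase l) ≠ 0 :=
    mul_ne_zero (pow_ne_zero _ (by norm_num)) (pow_ne_zero _ (by norm_num))
  have hz : ((Real.sqrt (lam l) : ℂ) * (Real.sqrt (lam l) : ℂ) -
      (Real.sqrt (1 - lam l) : ℂ) * (Real.sqrt (1 - lam l) : ℂ)) *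
      (((-1:ℂ)) ^ B.card * ((-1:ℂ)) ^ nlt l (A.erase l) * ξ (A, B)) = 0 := by
    linear_combination -(((-1:ℂ)) ^ B.card * ((-1:ℂ)) ^ nlt l (A.erase l)) * hcoord
  rcases mul_eq_zero.mp hz with h | h
  · exact absurd h hsq
  · rcases mul_eq_zero.mp h with h' | h'
    · exact absurd h' hs
    · exact h'

lemma K3 {lam : ℤ → ℝ} {a b : ℤ → CARSpace →L[ℂ] CARSpace} {G : CARSpace →L[ℂ] CARSpace}
    (ha : IsCAR_a lam a) (hb : IsCAR_b lam b) (hG : IsCAR_G G) {ξ : CARSpace} {l : ℤ} {ε : ℝ}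
    (h1 : (Real.sqrt (1 - lam l) : ℂ)⁻¹ • a l ξ = -((Real.sqrt (lam l) : ℂ)⁻¹) • G (b l ξ))
    (hε0 : 0 < ε) (hεl : ε ≤ lam l) (hεu : lam l ≤ 1 - ε) (hlh : lam l ≠ 1/2)
    {A B : Finset ℤ} (hA : l ∉ A) (hB : l ∉ B) (hpar : A.card % 2 ≠ B.card % 2) :
    ∃ κ : ℂ, κ ≠ 0 ∧ ‖κ‖ ≤ 1/(2*ε) ∧
      ξ (A, B) = κ * ξ (insert l A, insert l B) := by
  have hl0 : 0 < lam l := lt_of_lt_of_le hε0 hεl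
  have hl1 : lam l < 1 := by linarith
  obtain ⟨hμ, hν, hμν⟩ := sqrt_facts hl0 hl1 hlh
  have hpA : l ∈ insert l A := Finset.mem_insert_self l A
  have hcoord := congrArg (fun v : CARSpace => v (insert l A, B)) h1
  simp only [lp.coeFn_smul, Pi.smul_apply, lp.coeFn_neg, Pi.neg_apply, smul_eq_mul] at hcoord
  rw [apply_coord (a l) ξ, astar_inout ha hpA hB, G_coord hG, apply_coord (b l) ξ,
    bstar_inout hb hpA hB, Finset.erase_insert hA] at hcoord
  simp only [inner_add_left, inner_sub_left, inner_smul_left, coord_inner, map_mul, map_pow,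
    map_neg, map_one, Complex.conj_ofReal] at hcoord
  have heven : ((-1:ℂ)) ^ ((insert l A).card + B.card) = 1 := by
    rw [Finset.card_insert_of_notMem hA]; apply Even.neg_one_pow; rw [Nat.even_iff]; omega
  rw [heven, one_mul] at hcoord
  have hμ0 : ((Real.sqrt (lam l) : ℝ) : ℂ) ≠ 0 := by exact_mod_cast hμ.ne'
  have hν0 : ((Real.sqrt (1 - lam l) : ℝ) : ℂ) ≠ 0 := by exact_mod_cast hν.ne'
  field_simp at hcoord
  refine ⟨((Real.sqrt (1 - lam l) : ℂ) * (Real.sqrt (1 - lam l) : ℂ) -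
      (Real.sqrt (lam l) : ℂ) * (Real.sqrt (lam l) : ℂ)) /
      (2 * ((Real.sqrt (lam l) : ℂ) * (Real.sqrt (1 - lam l) : ℂ))) *
      (((-1:ℂ)) ^ nlt l B * (((-1:ℂ)) ^ B.card * ((-1:ℂ)) ^ nlt l A)), ?_, ?_, ?_⟩
  · apply mul_ne_zero
    · apply div_ne_zero
      · rw [← Complex.ofReal_mul, ← Complex.ofReal_mul, ← Complex.ofReal_sub,
          Real.mul_self_sqrt (by linarith : (0:ℝ) ≤ 1 - lam l), Real.mul_self_sqrt hl0.le]
        simp only [ne_eq, Complex.ofReal_eq_zero]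
        intro h; exact hlh (by linarith)
      · exact mul_ne_zero two_ne_zero (mul_ne_zero hμ0 hν0)
    · exact mul_ne_zero (pow_ne_zero _ (by norm_num))
        (mul_ne_zero (pow_ne_zero _ (by norm_num)) (pow_ne_zero _ (by norm_num)))
  · have hprod : ε ≤ Real.sqrt (lam l) * Real.sqrt (1 - lam l) := by
      rw [← Real.sqrt_mul hl0.le]
      have h1 : Real.sqrt (ε * ε) ≤ Real.sqrt (lam l * (1 - lam l)) :=
        Real.sqrt_le_sqrt (by nlinarith)
      rwa [Real.sqrt_mul_self hε0.le] at h1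
    have hcast : ((Real.sqrt (1 - lam l) : ℂ) * (Real.sqrt (1 - lam l) : ℂ) -
        (Real.sqrt (lam l) : ℂ) * (Real.sqrt (lam l) : ℂ)) /
        (2 * ((Real.sqrt (lam l) : ℂ) * (Real.sqrt (1 - lam l) : ℂ))) =
        ((((1 - lam l) - lam l) / (2 * (Real.sqrt (lam l) * Real.sqrt (1 - lam l))) : ℝ) : ℂ) := by
      have e1 : ((Real.sqrt (1 - lam l) : ℂ)) * (Real.sqrt (1 - lam l) : ℂ) =
          ((1 - lam l : ℝ) : ℂ) := by
        rw [← Complex.ofReal_mul, Real.mul_self_sqrt (by linarith : (0:ℝ) ≤ 1 - lam l)]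
      have e2 : ((Real.sqrt (lam l) : ℂ)) * (Real.sqrt (lam l) : ℂ) = ((lam l : ℝ) : ℂ) := by
        rw [← Complex.ofReal_mul, Real.mul_self_sqrt hl0.le]
      rw [e1, e2]
      push_cast
      ring
    rw [hcast, norm_mul]
    have habs1 : ‖(((-1:ℂ)) ^ nlt l B * (((-1:ℂ)) ^ B.card * ((-1:ℂ)) ^ nlt l A))‖ = 1 := by
      simp [map_mul, map_pow]
    rw [habs1, mul_one, Complex.norm_real, Real.norm_eq_abs, abs_div]
    have hd : |2 * (Real.sqrt (lam l) * Real.sqrt (1 - lam l))| =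
        2 * (Real.sqrt (lam l) * Real.sqrt (1 - lam l)) := abs_of_pos (by positivity)
    rw [hd]
    have hnum : |(1 - lam l) - lam l| ≤ 1 := abs_le.mpr ⟨by linarith, by linarith⟩
    exact div_le_div₀ zero_le_one hnum (by linarith) (by linarith)
  · have hden : (2 * ((Real.sqrt (lam l) : ℂ) * (Real.sqrt (1 - lam l) : ℂ))) ≠ 0 :=
      mul_ne_zero two_ne_zero (mul_ne_zero hμ0 hν0)
    rw [div_mul_eq_mul_div, div_mul_eq_mul_div, eq_div_iff hden]
    have hq1 : ((-1:ℂ)) ^ B.card * ((-1:ℂ)) ^ B.card = 1 := by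
      rw [← pow_add]; exact Even.neg_one_pow ⟨B.card, rfl⟩
    have hq2 : ((-1:ℂ)) ^ nlt l A * ((-1:ℂ)) ^ nlt l A = 1 := by
      rw [← pow_add]; exact Even.neg_one_pow ⟨nlt l A, rfl⟩
    linear_combination (((-1:ℂ)) ^ B.card * ((-1:ℂ)) ^ nlt l A) * hcoord -
      (2 * (Real.sqrt (lam l) : ℂ) * (Real.sqrt (1 - lam l) : ℂ) * ξ (A, B) *
        (((-1:ℂ)) ^ nlt l A * ((-1:ℂ)) ^ nlt l A)) * hq1 -
      (2 * (Real.sqrt (lam l) : ℂ) * (Real.sqrt (1 - lam l) : ℂ) * ξ (A, B)) * hq2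

lemma Kpast {lam : ℤ → ℝ} {a b : ℤ → CARSpace →L[ℂ] CARSpace} {G : CARSpace →L[ℂ] CARSpace}
    (ha : IsCAR_a lam a) (hb : IsCAR_b lam b) (hG : IsCAR_G G) {ξ : CARSpace} {ε : ℝ}
    (hε0 : 0 < ε)
    (hlam : ∀ l : ℤ, ε ≤ lam l ∧ lam l ≤ 1 - ε ∧ lam l ≠ 1 / 2)
    (hξ1 : ∀ l : ℤ, 0 ≤ l →
      (Real.sqrt (1 - lam l) : ℂ)⁻¹ • a l ξ = -((Real.sqrt (lam l) : ℂ)⁻¹) • G (b l ξ))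
    {A B : Finset ℤ} (hA : ∀ l : ℤ, 0 ≤ l → l ∉ A) (hB : ∀ l : ℤ, 0 ≤ l → l ∉ B)
    (hpar : A.card % 2 ≠ B.card % 2) : ξ (A, B) = 0 := by
  by_contra hz
  set δ := ‖ξ (A, B)‖ with hδdef
  have hδ : 0 < δ := by
    simpa [hδdef] using (norm_pos_iff.mpr hz)
  have hlow : ∀ n : ℕ, 2 * ε * δ ≤ ‖ξ (insert (n:ℤ) A, insert (n:ℤ) B)‖ := by
    intro n
    have hn : (0:ℤ) ≤ (n:ℤ) := Int.natCast_nonneg n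
    obtain ⟨κ, hκ0, hκle, hkeq⟩ := K3 ha hb hG (hξ1 _ hn) hε0 (hlam _).1 (hlam _).2.1
      (hlam _).2.2 (hA _ hn) (hB _ hn) hpar
    have h1 : δ = ‖κ‖ * ‖ξ (insert (n:ℤ) A, insert (n:ℤ) B)‖ := by
      rw [hδdef, hkeq, norm_mul]
    have h2 : δ ≤ 1/(2*ε) * ‖ξ (insert (n:ℤ) A, insert (n:ℤ) B)‖ := by
      rw [h1]
      exact mul_le_mul_of_nonneg_right hκle (norm_nonneg _)
    have hε2 : (0:ℝ) < 2*ε := by linarith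
    rw [div_mul_eq_mul_div, one_mul, le_div_iff₀ hε2] at h2
    linarith [h2]
  have hmem := lp.memℓp ξ
  have hpr : 0 < (2:ENNReal).toReal := by
    rw [ENNReal.toReal_ofNat]; norm_num
  have hsum := hmem.summable hpr
  have hginj : Function.Injective
      (fun n : ℕ => ((insert (n:ℤ) A, insert (n:ℤ) B) : Finset ℤ × Finset ℤ)) := by
    intro n m hnm
    simp only [Prod.mk.injEq] at hnm
    have h2 : (n:ℤ) ∈ insert (m:ℤ) A := hnm.1 ▸ Finset.mem_insert_self (n:ℤ) A
    rcases Finset.mem_insert.mp h2 with h | h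
    · exact_mod_cast h
    · exact absurd h (hA _ (Int.natCast_nonneg n))
  have hsum2 := hsum.comp_injective hginj
  have htend := hsum2.tendsto_atTop_zero
  have hc : (0:ℝ) < (2*ε*δ) ^ (2:ENNReal).toReal :=
    Real.rpow_pos_of_pos (by positivity) _
  obtain ⟨N, hN⟩ := (htend.eventually (gt_mem_nhds hc)).exists
  have hlowN : (2*ε*δ) ^ (2:ENNReal).toReal ≤
      ‖ξ (insert (N:ℤ) A, insert (N:ℤ) B)‖ ^ (2:ENNReal).toReal := by
    apply Real.rpow_le_rpow (by positivity) _ ENNReal.toReal_nonneg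
    exact hlow N
  simp only [Function.comp_apply] at hN
  linarith [hlowN, hN]

lemma filter_erase_nonneg (l : ℤ) (A : Finset ℤ) :
    (A.erase l).filter (fun x => 0 ≤ x) = (A.filter (fun x => 0 ≤ x)).erase l := by
  ext x
  simp only [Finset.mem_filter, Finset.mem_erase]
  tauto


/-- with past `P = {n < 0}` and future `F = {n ≥ 0}`, assume
`ε ≤ λ_l ≤ 1−ε`, `λ_l ≠ 1/2` for all `l`, with `0 < ε < 1/2`, and let `ξ` satisfy the
`l`-th intertwining equations for every `l ∈ F`. Then for every pair `(A,B)` of finite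
subsets of `ℤ` with `⟨e_{(A,B)}, ξ⟩ ≠ 0`, one has `card A ≡ card B (mod 2)`. -/
theorem stmt15 (lam : ℤ → ℝ) (ε : ℝ) (hε : 0 < ε ∧ ε < 1 / 2)
    (hlam : ∀ l : ℤ, ε ≤ lam l ∧ lam l ≤ 1 - ε ∧ lam l ≠ 1 / 2)
    (a b : ℤ → CARSpace →L[ℂ] CARSpace) (G : CARSpace →L[ℂ] CARSpace)
    (ha : IsCAR_a lam a) (hb : IsCAR_b lam b) (hG : IsCAR_G G)
    (ξ : CARSpace) (hξ : ∀ l : ℤ, 0 ≤ l → IntertwinesAt lam a b G l ξ) :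
    ∀ A B : Finset ℤ, ⟪carE (A, B), ξ⟫ ≠ 0 → A.card % 2 = B.card % 2 := by
  obtain ⟨hε0, hεh⟩ := hε
  have hlam0 : ∀ l : ℤ, 0 < lam l := fun l => lt_of_lt_of_le hε0 (hlam l).1
  have hlam1 : ∀ l : ℤ, lam l < 1 := fun l => by have := (hlam l).2.1; linarith
  have key : ∀ n : ℕ, ∀ A B : Finset ℤ, (A.filter fun x => 0 ≤ x).card ≤ n →
      A.card % 2 ≠ B.card % 2 → ξ (A, B) = 0 := by
    intro n
    induction n with
    | zero =>
      intro A B hcard hp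
      have hA0 : ∀ l : ℤ, 0 ≤ l → l ∉ A := by
        intro l hl hmem
        have h1 : l ∈ A.filter fun x => 0 ≤ x := Finset.mem_filter.mpr ⟨hmem, hl⟩
        have h2 := Finset.card_pos.mpr ⟨l, h1⟩
        omega
      by_cases hB1 : ∃ l : ℤ, 0 ≤ l ∧ l ∈ B
      · obtain ⟨l, hl, hlB⟩ := hB1
        exact K1 ha hb hG ((hξ l hl).1) (hlam0 l) (hlam1 l) (hlam l).2.2 (hA0 l hl) hlB hp
      · push_neg at hB1
        exact Kpast ha hb hG hε0 hlam (fun l hl => (hξ l hl).1) hA0 hB1 hp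
    | succ n ih =>
      intro A B hcard hp
      by_cases hc1 : ∃ l : ℤ, 0 ≤ l ∧ l ∈ A ∧ l ∉ B
      · obtain ⟨l, hl, hlA, hlB⟩ := hc1
        exact K2 ha hb hG ((hξ l hl).2) (hlam0 l) (hlam1 l) (hlam l).2.2 hlA hlB hp
      · by_cases hc2 : ∃ l : ℤ, 0 ≤ l ∧ l ∈ B ∧ l ∉ A
        · obtain ⟨l, hl, hlB, hlA⟩ := hc2
          exact K1 ha hb hG ((hξ l hl).1) (hlam0 l) (hlam1 l) (hlam l).2.2 hlA hlB hp
        · by_cases hc3 : ∃ l : ℤ, 0 ≤ l ∧ l ∈ A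
          · obtain ⟨l, hl, hlA⟩ := hc3
            have hlB : l ∈ B := by
              by_contra h
              exact hc1 ⟨l, hl, hlA, h⟩
            have hApos : 1 ≤ A.card := Finset.card_pos.mpr ⟨l, hlA⟩
            have hBpos : 1 ≤ B.card := Finset.card_pos.mpr ⟨l, hlB⟩
            have hp' : (A.erase l).card % 2 ≠ (B.erase l).card % 2 := by
              rw [Finset.card_erase_of_mem hlA, Finset.card_erase_of_mem hlB]; omega
            obtain ⟨κ, hκ0, _, hkeq⟩ := K3 ha hb hG ((hξ l hl).1) hε0 (hlam l).1
              (hlam l).2.1 (hlam l).2.2 (Finset.notMem_erase l A)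
              (Finset.notMem_erase l B) hp'
            rw [Finset.insert_erase hlA, Finset.insert_erase hlB] at hkeq
            have hz' : ξ (A.erase l, B.erase l) = 0 := by
              apply ih _ _ _ hp'
              rw [filter_erase_nonneg]
              have hlf : l ∈ A.filter (fun x => 0 ≤ x) := Finset.mem_filter.mpr ⟨hlA, hl⟩
              rw [Finset.card_erase_of_mem hlf]
              omega
            rw [hz'] at hkeq
            rcases mul_eq_zero.mp hkeq.symm with h | h
            · exact absurd h hκ0
            · exact h
          · push_neg at hc3 hc2
            exact Kpast ha hb hG hε0 hlam (fun l hl => (hξ l hl).1) hc3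
              (fun l hl hm => (hc3 l hl) (hc2 l hl hm)) hp
  intro A B hAB
  by_contra hpar
  rw [coord_inner] at hAB
  exact hAB (key _ A B le_rfl hpar)


end
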